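/- Let n ≥ 2 and l_1,...,l_n be positive integers with l = l_1 + ... + l_n ≥ 5. For 0 ≤ k ≤ l define a_k = 2^(binom(l-k,2)) · Σ binom(l-k; j_1,...,j_n) · ∏_{i=1}^n binom(l_i+2, j_i+2), the sum over all tuples (j_1,...,j_n) with 0 ≤ j_i ≤ l_i and j_1 + ... + j_n = l - k. Then for every k with 1 ≤ k ≤ l, a_k ≤ (2^(k-1)/k!) · a_0. -/

import Mathlib

open Finset

def Wt {n : ℕ} (L : Fin n → ℕ) (j : Fin n → ℕ) : ℕ :=
  Nat.multinomial Finset.univ j * ∏ i, Nat.choose (L i + 2) (j i + 2)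

def Ft {n : ℕ} (L : Fin n → ℕ) (m : ℕ) : Finset (Fin n → ℕ) :=
  (Finset.Nat.antidiagonalTuple n m).filter (fun j => ∀ i, j i ≤ L i)

def Tt {n : ℕ} (L : Fin n → ℕ) (m : ℕ) : ℕ := ∑ j ∈ Ft L m, Wt L j

lemma mem_Ft {n : ℕ} {L : Fin n → ℕ} {m : ℕ} {j : Fin n → ℕ} :
    j ∈ Ft L m ↔ (∑ i, j i) = m ∧ ∀ i, j i ≤ L i := by
  simp [Ft, Finset.Nat.mem_antidiagonalTuple]

lemma multinomial_update_succ {n : ℕ} (j : Fin n → ℕ) (i : Fin n) :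
    Nat.multinomial Finset.univ (Function.update j i (j i + 1)) * (j i + 1)
      = ((∑ i', j i') + 1) * Nat.multinomial Finset.univ j := by
  have hP : (∏ i', Nat.factorial (Function.update j i (j i + 1) i'))
      = (j i + 1) * ∏ i', Nat.factorial (j i') := by
    simp only [Function.apply_update (fun _ m => Nat.factorial m) j i (j i + 1)]
    rw [Finset.prod_update_of_mem (Finset.mem_univ i), Nat.factorial_succ, mul_assoc,
      ← Finset.erase_eq, Finset.mul_prod_erase univ (fun i' => Nat.factorial (j i')) (Finset.mem_univ i)]
  have hs : (∑ i', Function.update j i (j i + 1) i') = (∑ i', j i') + 1 := by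
    rw [Finset.sum_update_of_mem (Finset.mem_univ i), ← Finset.erase_eq,
      ← Finset.add_sum_erase univ j (Finset.mem_univ i)]
    omega
  have hpos : 0 < ∏ i', Nat.factorial (j i') :=
    Finset.prod_pos (fun i' _ => (j i').factorial_pos)
  apply Nat.eq_of_mul_eq_mul_left hpos
  calc (∏ i', Nat.factorial (j i')) * (Nat.multinomial Finset.univ (Function.update j i (j i + 1)) * (j i + 1))
      = (∏ i', Nat.factorial (Function.update j i (j i + 1) i')) *
          Nat.multinomial Finset.univ (Function.update j i (j i + 1)) := by rw [hP]; ring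
    _ = Nat.factorial (∑ i', Function.update j i (j i + 1) i') := Nat.multinomial_spec _ _
    _ = Nat.factorial ((∑ i', j i') + 1) := by rw [hs]
    _ = ((∑ i', j i') + 1) * ((∏ i', Nat.factorial (j i')) * Nat.multinomial Finset.univ j) := by
        rw [Nat.multinomial_spec, Nat.factorial_succ]
    _ = (∏ i', Nat.factorial (j i')) * (((∑ i', j i') + 1) * Nat.multinomial Finset.univ j) := by ring

lemma key_identity {n : ℕ} (L : Fin n → ℕ) (j : Fin n → ℕ) (i : Fin n) :
    ((∑ i', j i') + 1) * ((L i - j i) * Wt L j)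
      = (j i + 1) * ((j i + 3) * Wt L (Function.update j i (j i + 1))) := by
  have hprod : (∏ i', Nat.choose (L i' + 2) (Function.update j i (j i + 1) i' + 2))
      = Nat.choose (L i + 2) (j i + 3) *
        ∏ i' ∈ univ.erase i, Nat.choose (L i' + 2) (j i' + 2) := by
    simp only [Function.apply_update (fun i' m => Nat.choose (L i' + 2) (m + 2)) j i (j i + 1)]
    rw [Finset.prod_update_of_mem (Finset.mem_univ i), ← Finset.erase_eq]
  have hprod0 : (∏ i', Nat.choose (L i' + 2) (j i' + 2))
      = Nat.choose (L i + 2) (j i + 2) * ∏ i' ∈ univ.erase i, Nat.choose (L i' + 2) (j i' + 2) :=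
    (Finset.mul_prod_erase univ _ (Finset.mem_univ i)).symm
  have hchoose : Nat.choose (L i + 2) (j i + 3) * (j i + 3)
      = Nat.choose (L i + 2) (j i + 2) * (L i - j i) := by
    have h1 := Nat.choose_succ_right_eq (L i + 2) (j i + 2)
    have h2 : L i + 2 - (j i + 2) = L i - j i := by omega
    rw [h2] at h1
    exact h1
  have hmult := multinomial_update_succ j i
  unfold Wt
  rw [hprod, hprod0]
  calc ((∑ i', j i') + 1) * ((L i - j i) *
        (Nat.multinomial Finset.univ j *
          (Nat.choose (L i + 2) (j i + 2) * ∏ i' ∈ univ.erase i, Nat.choose (L i' + 2) (j i' + 2))))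
      = (((∑ i', j i') + 1) * Nat.multinomial Finset.univ j) *
          ((Nat.choose (L i + 2) (j i + 2) * (L i - j i)) *
            ∏ i' ∈ univ.erase i, Nat.choose (L i' + 2) (j i' + 2)) := by ring
    _ = (Nat.multinomial Finset.univ (Function.update j i (j i + 1)) * (j i + 1)) *
          ((Nat.choose (L i + 2) (j i + 3) * (j i + 3)) *
            ∏ i' ∈ univ.erase i, Nat.choose (L i' + 2) (j i' + 2)) := by rw [hmult, hchoose]
    _ = (j i + 1) * ((j i + 3) *
          (Nat.multinomial Finset.univ (Function.update j i (j i + 1)) *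
            (Nat.choose (L i + 2) (j i + 3) *
              ∏ i' ∈ univ.erase i, Nat.choose (L i' + 2) (j i' + 2)))) := by ring

lemma expand_lemma {n : ℕ} (L : Fin n → ℕ) (l : ℕ) (hsum : ∑ i, L i = l) (m : ℕ) :
    (m + 1) * ((l - m) * Tt L m)
      = ∑ j ∈ Ft L m, ∑ i, (j i + 1) * ((j i + 3) * Wt L (Function.update j i (j i + 1))) := by
  unfold Tt
  rw [Finset.mul_sum, Finset.mul_sum]
  apply Finset.sum_congr rfl
  intro j hj
  obtain ⟨hjs, hjle⟩ := mem_Ft.mp hj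
  have hlm : l - m = ∑ i, (L i - j i) := by
    have h1 : (∑ i, (L i - j i)) + ∑ i, j i = ∑ i, L i := by
      rw [← Finset.sum_add_distrib]
      exact Finset.sum_congr rfl (fun i _ => Nat.sub_add_cancel (hjle i))
    omega
  calc (m + 1) * ((l - m) * Wt L j) = (m + 1) * ((∑ i, (L i - j i)) * Wt L j) := by rw [hlm]
    _ = ∑ i, ((∑ i', j i') + 1) * ((L i - j i) * Wt L j) := by
        rw [Finset.sum_mul, Finset.mul_sum, hjs]
    _ = ∑ i, (j i + 1) * ((j i + 3) * Wt L (Function.update j i (j i + 1))) :=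
        Finset.sum_congr rfl (fun i _ => key_identity L j i)

lemma restrict_lemma {n : ℕ} (L : Fin n → ℕ) (m : ℕ) :
    ∑ p ∈ (Ft L m ×ˢ univ).filter (fun p => p.1 p.2 < L p.2),
        (p.1 p.2 + 1) * ((p.1 p.2 + 3) * Wt L (Function.update p.1 p.2 (p.1 p.2 + 1)))
      = ∑ p ∈ Ft L m ×ˢ univ,
        (p.1 p.2 + 1) * ((p.1 p.2 + 3) * Wt L (Function.update p.1 p.2 (p.1 p.2 + 1))) := by
  apply Finset.sum_filter_of_ne
  intro p hp hne
  by_contra hlt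
  apply hne
  obtain ⟨hp1, -⟩ := Finset.mem_product.mp hp
  obtain ⟨-, hle⟩ := mem_Ft.mp hp1
  have heq : p.1 p.2 = L p.2 := le_antisymm (hle p.2) (by omega)
  have hz : Wt L (Function.update p.1 p.2 (p.1 p.2 + 1)) = 0 := by
    unfold Wt
    rw [Finset.prod_eq_zero (Finset.mem_univ p.2), mul_zero]
    rw [Function.update_self, heq]
    exact Nat.choose_eq_zero_of_lt (by omega)
  rw [hz, mul_zero, mul_zero]

lemma bij_lemma {n : ℕ} (L : Fin n → ℕ) (m : ℕ) :
    ∑ p ∈ (Ft L m ×ˢ univ).filter (fun p => p.1 p.2 < L p.2),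
        (p.1 p.2 + 1) * ((p.1 p.2 + 3) * Wt L (Function.update p.1 p.2 (p.1 p.2 + 1)))
      = ∑ q ∈ (Ft L (m+1) ×ˢ univ).filter (fun q => 1 ≤ q.1 q.2),
        q.1 q.2 * ((q.1 q.2 + 2) * Wt L q.1) := by
  refine Finset.sum_nbij' (i := fun p => (Function.update p.1 p.2 (p.1 p.2 + 1), p.2))
    (j := fun q => (Function.update q.1 q.2 (q.1 q.2 - 1), q.2)) ?hi ?hj ?li ?ri ?h
  case hi =>
    intro p hp
    obtain ⟨hp1, hlt⟩ := Finset.mem_filter.mp hp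
    obtain ⟨hp1, -⟩ := Finset.mem_product.mp hp1
    obtain ⟨hsumj, hle⟩ := mem_Ft.mp hp1
    simp only [Finset.mem_filter, Finset.mem_product, Finset.mem_univ, and_true, mem_Ft]
    refine ⟨⟨?_, ?_⟩, ?_⟩
    · have h1 : ∑ i, Function.update p.1 p.2 (p.1 p.2 + 1) i
          = (p.1 p.2 + 1) + ∑ i ∈ univ.erase p.2, p.1 i := by
        rw [Finset.sum_update_of_mem (Finset.mem_univ p.2), ← Finset.erase_eq]
      have h2 : p.1 p.2 + ∑ i ∈ univ.erase p.2, p.1 i = ∑ i, p.1 i :=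
        Finset.add_sum_erase univ p.1 (Finset.mem_univ p.2)
      omega
    · intro i'
      rcases eq_or_ne i' p.2 with rfl | hne
      · rw [Function.update_self]; omega
      · rw [Function.update_of_ne hne]; exact hle i'
    · rw [Function.update_self]; omega
  case hj =>
    intro q hq
    obtain ⟨hq1, hge⟩ := Finset.mem_filter.mp hq
    obtain ⟨hq1, -⟩ := Finset.mem_product.mp hq1
    obtain ⟨hsumj, hle⟩ := mem_Ft.mp hq1
    simp only [Finset.mem_filter, Finset.mem_product, Finset.mem_univ, and_true, mem_Ft]
    refine ⟨⟨?_, ?_⟩, ?_⟩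
    · have h1 : ∑ i, Function.update q.1 q.2 (q.1 q.2 - 1) i
          = (q.1 q.2 - 1) + ∑ i ∈ univ.erase q.2, q.1 i := by
        rw [Finset.sum_update_of_mem (Finset.mem_univ q.2), ← Finset.erase_eq]
      have h2 : q.1 q.2 + ∑ i ∈ univ.erase q.2, q.1 i = ∑ i, q.1 i :=
        Finset.add_sum_erase univ q.1 (Finset.mem_univ q.2)
      omega
    · intro i'
      rcases eq_or_ne i' q.2 with rfl | hne
      · rw [Function.update_self]
        exact le_trans (Nat.sub_le _ _) (hle q.2)
      · rw [Function.update_of_ne hne]; exact hle i'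
    · rw [Function.update_self]
      have := hle q.2
      omega
  case li =>
    intro p hp
    have h1 : (Function.update (Function.update p.1 p.2 (p.1 p.2 + 1)) p.2
        (Function.update p.1 p.2 (p.1 p.2 + 1) p.2 - 1)) = p.1 := by
      funext i'
      rcases eq_or_ne i' p.2 with rfl | hne
      · simp
      · simp [Function.update_of_ne hne]
    rw [Prod.ext_iff]
    exact ⟨h1, rfl⟩
  case ri =>
    intro q hq
    obtain ⟨-, hge⟩ := Finset.mem_filter.mp hq
    have h1 : (Function.update (Function.update q.1 q.2 (q.1 q.2 - 1)) q.2
        (Function.update q.1 q.2 (q.1 q.2 - 1) q.2 + 1)) = q.1 := by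
      funext i'
      rcases eq_or_ne i' q.2 with rfl | hne
      · simp only [Function.update_self]
        omega
      · simp [Function.update_of_ne hne]
    rw [Prod.ext_iff]
    exact ⟨h1, rfl⟩
  case h =>
    intro p hp
    simp only [Function.update_self]
    try ring

lemma bound_lemma {n : ℕ} (L : Fin n → ℕ) (m : ℕ) :
    ∑ j' ∈ Ft L (m+1), ∑ i, j' i * ((j' i + 2) * Wt L j')
      ≤ (m + 1) * ((m + 3) * Tt L (m + 1)) := by
  have h1 : ∀ j' ∈ Ft L (m+1),
      ∑ i, j' i * ((j' i + 2) * Wt L j') ≤ (m + 1) * ((m + 3) * Wt L j') := by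
    intro j' hj'
    obtain ⟨hsumj, -⟩ := mem_Ft.mp hj'
    have hbd : ∀ i : Fin n, j' i ≤ m + 1 := by
      intro i
      calc j' i ≤ ∑ i', j' i' :=
            Finset.single_le_sum (fun i' _ => Nat.zero_le _) (Finset.mem_univ i)
        _ = m + 1 := hsumj
    calc ∑ i, j' i * ((j' i + 2) * Wt L j')
        ≤ ∑ i, j' i * ((m + 3) * Wt L j') := by
          apply Finset.sum_le_sum
          intro i _
          exact Nat.mul_le_mul_left _ (Nat.mul_le_mul_right _ (by have := hbd i; omega))
      _ = (∑ i, j' i) * ((m + 3) * Wt L j') := by rw [Finset.sum_mul]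
      _ = (m + 1) * ((m + 3) * Wt L j') := by rw [hsumj]
  calc ∑ j' ∈ Ft L (m+1), ∑ i, j' i * ((j' i + 2) * Wt L j')
      ≤ ∑ j' ∈ Ft L (m+1), (m + 1) * ((m + 3) * Wt L j') := Finset.sum_le_sum h1
    _ = (m + 1) * ((m + 3) * Tt L (m + 1)) := by
        unfold Tt
        rw [Finset.mul_sum, Finset.mul_sum]

lemma step_lemma {n : ℕ} (L : Fin n → ℕ) (l : ℕ) (hsum : ∑ i, L i = l) (m : ℕ) :
    (l - m) * Tt L m ≤ (m + 3) * Tt L (m + 1) := by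
  refine Nat.le_of_mul_le_mul_left ?_ (Nat.succ_pos m)
  calc (m + 1) * ((l - m) * Tt L m)
      = ∑ j ∈ Ft L m, ∑ i, (j i + 1) * ((j i + 3) * Wt L (Function.update j i (j i + 1))) :=
        expand_lemma L l hsum m
    _ = ∑ p ∈ Ft L m ×ˢ univ,
          (p.1 p.2 + 1) * ((p.1 p.2 + 3) * Wt L (Function.update p.1 p.2 (p.1 p.2 + 1))) :=
        (Finset.sum_product' (s := Ft L m) (t := univ)
          (f := fun j i => (j i + 1) * ((j i + 3) * Wt L (Function.update j i (j i + 1))))).symm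
    _ = ∑ p ∈ (Ft L m ×ˢ univ).filter (fun p => p.1 p.2 < L p.2),
          (p.1 p.2 + 1) * ((p.1 p.2 + 3) * Wt L (Function.update p.1 p.2 (p.1 p.2 + 1))) :=
        (restrict_lemma L m).symm
    _ = ∑ q ∈ (Ft L (m+1) ×ˢ univ).filter (fun q => 1 ≤ q.1 q.2),
          q.1 q.2 * ((q.1 q.2 + 2) * Wt L q.1) := bij_lemma L m
    _ ≤ ∑ q ∈ Ft L (m+1) ×ˢ univ, q.1 q.2 * ((q.1 q.2 + 2) * Wt L q.1) :=
        Finset.sum_le_sum_of_subset (Finset.filter_subset _ _)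
    _ = ∑ j' ∈ Ft L (m+1), ∑ i, j' i * ((j' i + 2) * Wt L j') :=
        Finset.sum_product' (s := Ft L (m+1)) (t := univ)
          (f := fun j' i => j' i * ((j' i + 2) * Wt L j'))
    _ ≤ (m + 1) * ((m + 3) * Tt L (m + 1)) := bound_lemma L m

lemma two_pow_aux : ∀ t : ℕ, 2 ≤ t → t + 2 ≤ 2 ^ t := by
  intro t ht
  induction t with
  | zero => omega
  | succ p ih =>
    rcases Nat.lt_or_ge p 2 with h | h
    · interval_cases p <;> simp <;> omega
    · have := ih (by omega)
      have h2 : 2 ^ (p + 1) = 2 * 2 ^ p := by ring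
      omega

lemma two_pow_aux2 : ∀ t : ℕ, 4 ≤ t → 2 * t + 6 ≤ 2 ^ t := by
  intro t ht
  induction t with
  | zero => omega
  | succ p ih =>
    rcases Nat.lt_or_ge p 4 with h | h
    · interval_cases p <;> first | omega | norm_num
    · have := ih (by omega)
      have h2 : 2 ^ (p + 1) = 2 * 2 ^ p := by ring
      omega

theorem stmt_7 (n : ℕ) (hn : 2 ≤ n) (l : ℕ) (L : Fin n → ℕ)
    (hL : ∀ i, 0 < L i) (hsum : ∑ i, L i = l) (hl : 5 ≤ l)
    (a : ℕ → ℕ)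
    (ha : ∀ k, a k = 2 ^ (Nat.choose (l - k) 2) *
      ∑ j ∈ (Finset.Nat.antidiagonalTuple n (l - k)).filter (fun j => ∀ i, j i ≤ L i),
        Nat.multinomial Finset.univ j * ∏ i, Nat.choose (L i + 2) (j i + 2))
    (k : ℕ) (hk : 1 ≤ k) (hkl : k ≤ l) :
    (a k : ℝ) ≤ 2 ^ (k - 1) / (Nat.factorial k : ℝ) * (a 0 : ℝ) := by
  have ha' : ∀ k', a k' = 2 ^ (Nat.choose (l - k') 2) * Tt L (l - k') := ha
  clear ha
  -- the step inequality at the level of a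
  have astep : ∀ k', 1 ≤ k' → k' ≤ l →
      k' * (2 ^ (l - k') * a k') ≤ (l - k' + 3) * a (k' - 1) := by
    intro k' h1 h2
    have hch : Nat.choose ((l - k') + 1) 2 = (l - k') + Nat.choose (l - k') 2 := by
      rw [Nat.choose_succ_succ, Nat.choose_one_right]
    have hak1 : a (k' - 1) = 2 ^ ((l - k') + Nat.choose (l - k') 2) * Tt L ((l - k') + 1) := by
      rw [ha' (k' - 1), show l - (k' - 1) = (l - k') + 1 by omega, hch]
    have hstep := step_lemma L l hsum (l - k')
    rw [show l - (l - k') = k' by omega] at hstep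
    calc k' * (2 ^ (l - k') * a k')
        = 2 ^ (l - k') * 2 ^ (Nat.choose (l - k') 2) * (k' * Tt L (l - k')) := by
          rw [ha' k']; ring
      _ ≤ 2 ^ (l - k') * 2 ^ (Nat.choose (l - k') 2) * ((l - k' + 3) * Tt L ((l - k') + 1)) :=
          Nat.mul_le_mul_left _ hstep
      _ = (l - k' + 3) * a (k' - 1) := by rw [hak1, pow_add]; ring
  -- main induction: strengthened bound below l
  have U : ∀ k', 1 ≤ k' → k' + 1 ≤ l →
      2 * (Nat.factorial k' * a k') ≤ 2 ^ (k' - 1) * a 0 := by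
    intro k'
    induction k' with
    | zero => omega
    | succ p ih =>
      intro h1 h2
      rcases Nat.eq_zero_or_pos p with rfl | hp
      · -- base case k' = 1
        norm_num
        have hs := astep 1 le_rfl (by omega)
        rw [one_mul] at hs
        have hb : 2 * (l + 2) ≤ 2 ^ (l - 1) := by
          have := two_pow_aux2 (l - 1) (by omega)
          omega
        have hc : 2 ^ (l - 1) * (2 * a 1) ≤ 2 ^ (l - 1) * a 0 := by
          calc 2 ^ (l - 1) * (2 * a 1) = 2 * (2 ^ (l - 1) * a 1) := by ring
            _ ≤ 2 * ((l - 1 + 3) * a 0) := by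
                exact Nat.mul_le_mul_left _ hs
            _ = (2 * (l + 2)) * a 0 := by
                rw [show l - 1 + 3 = l + 2 by omega]; ring
            _ ≤ 2 ^ (l - 1) * a 0 := Nat.mul_le_mul_right _ hb
        exact Nat.le_of_mul_le_mul_left hc (Nat.pow_pos (by norm_num))
      · -- inductive step
        have ihp := ih hp (by omega)
        have hs := astep (p + 1) (by omega) (by omega)
        rw [show p + 1 - 1 = p by omega] at hs
        set t := l - (p + 1) with hT
        have ht1 : 1 ≤ t := by omega
        have haux : t + 3 ≤ 2 ^ (t + 1) := by
          have := two_pow_aux (t + 1) (by omega)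
          omega
        have hc : 2 ^ t * (2 * (Nat.factorial (p + 1) * a (p + 1)))
            ≤ 2 ^ t * (2 ^ (p + 1 - 1) * a 0) := by
          calc 2 ^ t * (2 * (Nat.factorial (p + 1) * a (p + 1)))
              = 2 * Nat.factorial p * ((p + 1) * (2 ^ t * a (p + 1))) := by
                rw [Nat.factorial_succ]; ring
            _ ≤ 2 * Nat.factorial p * ((t + 3) * a p) :=
                Nat.mul_le_mul_left _ hs
            _ = (t + 3) * (2 * (Nat.factorial p * a p)) := by ring
            _ ≤ (t + 3) * (2 ^ (p - 1) * a 0) := Nat.mul_le_mul_left _ ihp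
            _ ≤ 2 ^ (t + 1) * (2 ^ (p - 1) * a 0) :=
                Nat.mul_le_mul_right _ haux
            _ = 2 ^ (t + 1 + (p - 1)) * a 0 := by rw [pow_add]; ring
            _ = 2 ^ t * (2 ^ (p + 1 - 1) * a 0) := by
                rw [show t + 1 + (p - 1) = t + p by omega, pow_add,
                  show p + 1 - 1 = p by omega]
                ring
        exact Nat.le_of_mul_le_mul_left hc (Nat.pow_pos (by norm_num))
  -- full nat claim
  have main : Nat.factorial k * a k ≤ 2 ^ (k - 1) * a 0 := by
    rcases Nat.lt_or_ge k l with hlt | hge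
    · have := U k hk (by omega)
      omega
    · have hkeq : k = l := le_antisymm hkl hge
      subst hkeq
      have hU := U (k - 1) (by omega) (by omega)
      have hs := astep k hk le_rfl
      rw [show k - k = 0 by omega, pow_zero, one_mul] at hs
      have hfact : Nat.factorial k = k * Nat.factorial (k - 1) := by
        rw [← Nat.mul_factorial_pred (by omega : k ≠ 0)]
      have hc : 2 * (Nat.factorial k * a k) ≤ 2 * (2 ^ (k - 1) * a 0) := by
        calc 2 * (Nat.factorial k * a k)
            = 2 * Nat.factorial (k - 1) * (k * a k) := by rw [hfact]; ring
          _ ≤ 2 * Nat.factorial (k - 1) * ((0 + 3) * a (k - 1)) := Nat.mul_le_mul_left _ hs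
          _ = 3 * (2 * (Nat.factorial (k - 1) * a (k - 1))) := by ring
          _ ≤ 3 * (2 ^ (k - 1 - 1) * a 0) := Nat.mul_le_mul_left _ hU
          _ ≤ 4 * (2 ^ (k - 1 - 1) * a 0) := Nat.mul_le_mul_right _ (by norm_num)
          _ = 2 * (2 ^ (k - 1 - 1 + 1) * a 0) := by rw [pow_add]; ring
          _ = 2 * (2 ^ (k - 1) * a 0) := by rw [show k - 1 - 1 + 1 = k - 1 by omega]
      omega
  -- convert to the real-valued statement
  have hfpos : (0 : ℝ) < (Nat.factorial k : ℝ) := by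
    exact_mod_cast Nat.factorial_pos k
  rw [div_mul_eq_mul_div, le_div_iff₀ hfpos]
  have hcast : ((Nat.factorial k * a k : ℕ) : ℝ) ≤ ((2 ^ (k - 1) * a 0 : ℕ) : ℝ) := by
    exact_mod_cast main
  push_cast at hcast
  calc (a k : ℝ) * (Nat.factorial k : ℝ) = (Nat.factorial k : ℝ) * (a k : ℝ) := by ring
    _ ≤ 2 ^ (k - 1) * (a 0 : ℝ) := hcast
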